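/- Let G be a block graph with a diametral path P = (v_0, v_1, ..., v_d) with d ≥ 2, where a diametral path realizes the diameter of G. Then v_0 and v_d are simplicial vertices of G, and v_1, ..., v_{d-1} are cut vertices of G. -/

import Mathlib

open SimpleGraph Set

/-- The closed neighborhood `N[D]` of a set of vertices. -/
def closedNbhd {V : Type*} (G : SimpleGraph V) (D : Set V) : Set V :=
  {w | w ∈ D ∨ ∃ v ∈ D, G.Adj v w}

/-- `D` is an isolating set: the vertices outside `N[D]` form an independent set. -/
def IsIsolating {V : Type*} (G : SimpleGraph V) (D : Set V) : Prop :=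
  ∀ a b : V, a ∉ closedNbhd G D → b ∉ closedNbhd G D → ¬ G.Adj a b

/-- The isolation number: minimum cardinality of an isolating set. -/
noncomputable def isolNum {V : Type*} (G : SimpleGraph V) : ℕ :=
  sInf {k | ∃ D : Set V, IsIsolating G D ∧ D.ncard = k}

/-- `v` is a cut vertex of `G`. -/
def IsCutVertex {V : Type*} (G : SimpleGraph V) (v : V) : Prop :=
  G.Connected ∧ ¬ (G.induce {w | w ≠ v}).Connected

/-- `B` is a block of `G`: a maximal connected set of vertices inducing a subgraph
without cut vertices. -/
def IsBlock {V : Type*} (G : SimpleGraph V) (B : Set V) : Prop :=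
  (G.induce B).Connected ∧ (∀ v, ¬ IsCutVertex (G.induce B) v) ∧
    ∀ B' : Set V, B ⊆ B' → (G.induce B').Connected →
      (∀ v, ¬ IsCutVertex (G.induce B') v) → B' = B

/-- A block graph: a connected graph all of whose blocks are complete. -/
def IsBlockGraph {V : Type*} (G : SimpleGraph V) : Prop :=
  G.Connected ∧ ∀ B : Set V, IsBlock G B → ∀ x ∈ B, ∀ y ∈ B, x ≠ y → G.Adj x y

/-- `v` is simplicial: its closed neighborhood induces a complete graph. -/
def Simplicial {V : Type*} (G : SimpleGraph V) (v : V) : Prop :=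
  ∀ x ∈ G.neighborSet v, ∀ y ∈ G.neighborSet v, x ≠ y → G.Adj x y

/-- An end-block: a block containing at most one cut vertex of `G`. -/
def IsEndBlock {V : Type*} (G : SimpleGraph V) (B : Set V) : Prop :=
  IsBlock G B ∧ {v ∈ B | IsCutVertex G v}.Subsingleton


section Aux

open SimpleGraph.Walk

namespace SimpleGraph.Walk

variable {V : Type*} {G : SimpleGraph V}

/-- Transfer a walk to the subgraph induced on a set containing its support. -/
def toInduce {S : Set V} : ∀ {a b : V} (W : G.Walk a b) (h : ∀ x ∈ W.support, x ∈ S),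
    (G.induce S).Walk ⟨a, h a W.start_mem_support⟩ ⟨b, h b W.end_mem_support⟩
  | _, _, nil, _ => Walk.nil
  | _, _, cons hadj q, h =>
      Walk.cons (by exact hadj) (q.toInduce (fun x hx => h x (by simp [hx])))

lemma support_toInduce {S : Set V} : ∀ {a b : V} (W : G.Walk a b)
    (h : ∀ x ∈ W.support, x ∈ S) (y : ↑S), y ∈ (W.toInduce h).support → (y : V) ∈ W.support
  | _, _, nil, _, y, hy => by
      simp only [toInduce, support_nil, List.mem_singleton] at hy
      subst hy; simp
  | _, _, cons hadj q, h, y, hy => by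
      simp only [toInduce, support_cons, List.mem_cons] at hy
      erw [Walk.support_cons, List.mem_cons] at hy
      rcases hy with hy | hy
      · subst hy; simp
      · simp only [support_cons, List.mem_cons]
        exact Or.inr (support_toInduce q _ y hy)

end SimpleGraph.Walk

variable {V : Type*} {G : SimpleGraph V}

lemma induce_connected_core {S : Set V} {x0 : V} (hx0 : x0 ∈ S)
    (h : ∀ x, (hx : x ∈ S) → ∃ (W : G.Walk x x0), ∀ y ∈ W.support, y ∈ S) :
    (G.induce S).Connected := by
  rw [connected_iff]
  have reach : ∀ a : ↑S, (G.induce S).Reachable a ⟨x0, hx0⟩ := by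
    rintro ⟨x, hx⟩
    obtain ⟨W, hW⟩ := h x hx
    exact ⟨W.toInduce hW⟩
  exact ⟨fun a b => (reach a).trans (reach b).symm, ⟨⟨x0, hx0⟩⟩⟩


end Aux

section Aux2

open SimpleGraph.Walk

variable {V : Type*} {G : SimpleGraph V}


-- closed walk: membership in tail
lemma mem_support_tail_of_closed {v : V} {p : G.Walk v v} (hp : ¬ p.Nil) {x : V}
    (hx : x ∈ p.support) : x ∈ p.support.tail := by
  rw [p.support_eq_cons] at hx
  rcases List.mem_cons.mp hx with rfl | hx
  · rw [← p.support_tail_of_not_nil hp]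
    exact p.tail.end_mem_support
  · exact hx

lemma mem_support_rotate_iff [DecidableEq V] {v x u : V} (p : G.Walk v v) (hp : ¬ p.Nil) (h : u ∈ p.support) :
    x ∈ (p.rotate u h).support ↔ x ∈ p.support := by
  have hrot := p.support_rotate u h
  have hn' : ¬ (p.rotate u h).Nil := by
    rw [not_nil_iff_lt_length] at hp ⊢
    have h2 : (p.takeUntil u h).length + (p.dropUntil u h).length = p.length := by
      rw [← Walk.length_append, p.take_spec h]
    have : (p.rotate u h).length = p.length := by
      unfold Walk.rotate
      rw [Walk.length_append]
      omega
    omega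
  constructor
  · intro hx
    have := (hrot.mem_iff).mp (mem_support_tail_of_closed hn' hx)
    exact List.mem_of_mem_tail this
  · intro hx
    have := (hrot.mem_iff).mpr (mem_support_tail_of_closed hp hx)
    exact List.mem_of_mem_tail this



lemma cycle_no_cutvertex [DecidableEq V] {b : V} {W : G.Walk b b} (hW : W.IsCycle)
    (v : ↑{x | x ∈ W.support}) :
    ¬ IsCutVertex (G.induce {x | x ∈ W.support}) v := by
  rintro ⟨-, hnc⟩
  apply hnc
  have hv0 : (v : V) ∈ W.support := v.2
  have hWn : ¬ W.Nil := hW.not_nil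
  -- rotate the cycle to start at v
  set C : G.Walk (v : V) (v : V) := W.rotate _ hv0 with hC
  have hCc : C.IsCycle := hW.rotate hv0
  have hCn : ¬ C.Nil := hCc.not_nil
  have hmemC : ∀ x : V, x ∈ C.support ↔ x ∈ W.support := fun x =>
    mem_support_rotate_iff W hWn hv0
  have hC3 : 3 ≤ C.length := hCc.three_le_length
  -- D = tail of C, a path ending at v
  set D := C.tail with hD
  have hcons : Walk.cons (C.adj_snd hCn) D = C := C.cons_tail_eq hCn
  have hDlen : D.length + 1 = C.length := C.length_tail_add_one hCn
  have hDpath : D.IsPath := by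
    have h2 := hCc
    rw [← hcons] at h2
    exact ((Walk.cons_isCycle_iff _ _).mp h2).1
  have hDn : ¬ D.Nil := by rw [not_nil_iff_lt_length]; omega
  have hDRn : ¬ D.reverse.Nil := by
    rw [not_nil_iff_lt_length, Walk.length_reverse]
    rw [not_nil_iff_lt_length] at hDn; exact hDn
  -- E = D.reverse.tail : walk avoiding v covering S minus v
  set E := D.reverse.tail with hE
  have hEsupp : D.reverse.support = (v : V) :: E.support := by
    rw [hE, support_tail_of_not_nil _ hDRn, ← D.reverse.support_eq_cons]
  have hv0E : (v : V) ∉ E.support := by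
    have hnd : D.reverse.support.Nodup := hDpath.reverse.2
    rw [hEsupp] at hnd
    exact (List.nodup_cons.mp hnd).1
  have hCsupp : C.support = (v : V) :: D.support := by
    have h := congrArg Walk.support hcons
    rw [Walk.support_cons] at h
    exact h.symm
  have hcover : ∀ x : V, x ∈ C.support → x ≠ (v : V) → x ∈ E.support := by
    intro x hx hxv
    rw [hCsupp] at hx
    rcases List.mem_cons.mp hx with rfl | hx
    · exact absurd rfl hxv
    · have h3 : x ∈ D.reverse.support := by rwa [Walk.support_reverse, List.mem_reverse]
      rw [hEsupp] at h3
      rcases List.mem_cons.mp h3 with rfl | h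
      · exact absurd rfl hxv
      · exact h
  have hEsub : ∀ x : V, x ∈ E.support → x ∈ C.support := by
    intro x hx
    have h3 : x ∈ D.reverse.support := by rw [hEsupp]; exact List.mem_cons_of_mem _ hx
    rw [Walk.support_reverse, List.mem_reverse] at h3
    rw [hCsupp]
    exact List.mem_cons_of_mem _ h3
  -- base point
  have he0E : D.reverse.getVert 1 ∈ E.support := E.start_mem_support
  have he0S : D.reverse.getVert 1 ∈ {x | x ∈ W.support} := (hmemC _).mp (hEsub _ he0E)
  have he0v : D.reverse.getVert 1 ≠ (v : V) := ne_of_mem_of_not_mem he0E hv0E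
  apply induce_connected_core (G := G.induce {x | x ∈ W.support}) (S := {w | w ≠ v})
    (x0 := ⟨D.reverse.getVert 1, he0S⟩)
    (by exact fun h => he0v (congrArg Subtype.val h))
  rintro z hzv
  have hzv0 : (z : V) ≠ (v : V) := fun h => hzv (Subtype.ext h)
  have hzE : (z : V) ∈ E.support := hcover _ ((hmemC _).mpr z.2) hzv0
  -- walk in G from z to base within E.support
  set F : G.Walk (z : V) (D.reverse.getVert 1) := (E.takeUntil (z : V) hzE).reverse with hF
  have hFsupp : ∀ y ∈ F.support, y ∈ E.support := by
    intro y hy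
    rw [hF, Walk.support_reverse, List.mem_reverse] at hy
    exact E.support_takeUntil_subset hzE hy
  have hFS : ∀ y ∈ F.support, y ∈ {x | x ∈ W.support} :=
    fun y hy => (hmemC y).mp (hEsub y (hFsupp y hy))
  refine ⟨(F.toInduce hFS).copy (Subtype.ext rfl) rfl, ?_⟩
  intro y hy
  rw [Walk.support_copy] at hy
  have h4 : (y : V) ∈ F.support := Walk.support_toInduce F hFS y hy
  intro h
  have h5 : (y : V) ∈ E.support := hFsupp _ h4
  rw [congrArg Subtype.val h] at h5
  exact hv0E h5

lemma walk_induce_connected [DecidableEq V] {a b : V} (W : G.Walk a b) :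
    (G.induce {x | x ∈ W.support}).Connected := by
  apply induce_connected_core (x0 := a) (by exact W.start_mem_support)
  intro x hx
  refine ⟨(W.takeUntil x hx).reverse, fun y hy => ?_⟩
  rw [Walk.support_reverse, List.mem_reverse] at hy
  exact W.support_takeUntil_subset hx hy


lemma exists_block_superset [Fintype V] (S : Set V)
    (hconn : (G.induce S).Connected) (hncut : ∀ v, ¬ IsCutVertex (G.induce S) v) :
    ∃ B : Set V, IsBlock G B ∧ S ⊆ B := by
  classical
  obtain ⟨B, hB, hmax⟩ := Set.Finite.exists_maximalFor id
    {B : Set V | S ⊆ B ∧ (G.induce B).Connected ∧ ∀ v, ¬ IsCutVertex (G.induce B) v}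
    (Set.toFinite _) ⟨S, subset_rfl, hconn, hncut⟩
  exact ⟨B, ⟨hB.2.1, hB.2.2, fun B' hBB' hc hnc =>
    Set.Subset.antisymm (hmax ⟨hB.1.trans hBB', hc, hnc⟩ hBB') hBB'⟩, hB.1⟩

/-- Core separation lemma: in a block graph, if `a—b—c` and `a` is reachable from `c`
while avoiding `b`, then `a` and `c` are adjacent. -/
lemma core_adj [Fintype V] (hbg : IsBlockGraph G) {a b c : V}
    (hab : G.Adj a b) (hbc : G.Adj b c) (hac : a ≠ c)
    (hr : (G.induce {w | w ≠ b}).Reachable ⟨a, hab.ne⟩ ⟨c, hbc.ne'⟩) : G.Adj a c := by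
  classical
  obtain ⟨W0⟩ := hr
  set W1 := W0.toPath with hW1
  set W2 : G.Walk a c := W1.1.map (SimpleGraph.Embedding.induce {w | w ≠ b}).toHom with hW2
  have hW2path : W2.IsPath := Walk.map_isPath_of_injective Subtype.val_injective W1.2
  have hbW2 : b ∉ W2.support := by
    rw [hW2]; erw [Walk.support_map]
    rintro hmem
    obtain ⟨y, -, hy⟩ := List.mem_map.mp hmem
    exact y.2 hy
  -- build the cycle b - a - ... - c - b
  have hKpath : (W2.concat hbc.symm).IsPath := by
    rw [← Walk.isPath_reverse_iff, Walk.reverse_concat]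
    exact (hW2path.reverse).cons (by rwa [Walk.support_reverse, List.mem_reverse])
  have hKedge : s(b, a) ∉ (W2.concat hbc.symm).edges := by
    rw [Walk.edges_concat]
    intro hmem
    rw [List.concat_eq_append] at hmem
    rcases List.mem_append.mp hmem with h | h'
    · exact hbW2 (W2.fst_mem_support_of_mem_edges h)
    · have h := List.mem_singleton.mp h'
      rcases Sym2.eq_iff.mp h with ⟨rfl, rfl⟩ | ⟨h1, h2⟩
      · exact hbc.ne rfl
      · exact hac h2
  have hcyc : (Walk.cons hab.symm (W2.concat hbc.symm)).IsCycle :=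
    (Walk.cons_isCycle_iff _ _).mpr ⟨hKpath, hKedge⟩
  set K := Walk.cons hab.symm (W2.concat hbc.symm) with hK
  obtain ⟨B, hB, hSB⟩ := exists_block_superset {x | x ∈ K.support}
    (walk_induce_connected K) (cycle_no_cutvertex hcyc)
  have haK : a ∈ K.support := by
    rw [hK, Walk.support_cons]
    exact List.mem_cons_of_mem _ (W2.concat hbc.symm).start_mem_support
  have hcK : c ∈ K.support := by
    rw [hK, Walk.support_cons]
    refine List.mem_cons_of_mem _ ?_
    rw [Walk.concat_eq_append]
    rw [Walk.mem_support_append_iff]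
    exact Or.inl W2.end_mem_support
  exact hbg.2 B hB a (hSB haK) c (hSB hcK) hac

lemma endpoint_simplicial [Fintype V] (hbg : IsBlockGraph G) {u w : V} (p : G.Walk u w)
    (hdiam : ∀ x y, G.dist x y ≤ G.dist u w) :
    ∀ x ∈ G.neighborSet u, ∀ y ∈ G.neighborSet u, x ≠ y → G.Adj x y := by
  classical
  intro x hx y hy hxy
  by_contra hadj
  have hux : G.Adj u x := hx
  have huy : G.Adj u y := hy
  have hnr : ¬ (G.induce {t | t ≠ u}).Reachable ⟨x, hux.ne'⟩ ⟨y, huy.ne'⟩ :=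
    fun hr => hadj (core_adj hbg hux.symm huy hxy hr)
  have hconn := hbg.1
  have key : ∀ z : V, G.Adj u z → ∀ (q : G.Walk z w), q.length = G.dist z w →
      u ∈ q.support → False := by
    intro z huz q hql hu
    have h1 : G.dist z u ≤ (q.takeUntil u hu).length := SimpleGraph.dist_le _
    have h2 : G.dist u w ≤ (q.dropUntil u hu).length := SimpleGraph.dist_le _
    have h3 : (q.takeUntil u hu).length + (q.dropUntil u hu).length = q.length := by
      rw [← Walk.length_append, q.take_spec hu]
    have h4 : G.dist z w ≤ G.dist u w := hdiam z w
    have h5 : 0 < G.dist z u := hconn.pos_dist_of_ne huz.ne'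
    omega
  obtain ⟨q, -, hql⟩ := hconn.exists_path_of_dist x w
  obtain ⟨r, -, hrl⟩ := hconn.exists_path_of_dist y w
  by_cases huq : u ∈ q.support
  · exact key x hux q hql huq
  by_cases hur : u ∈ r.support
  · exact key y huy r hrl hur
  apply hnr
  have hsup : ∀ t ∈ (q.append r.reverse).support, t ∈ {t | t ≠ u} := by
    intro t ht
    rw [Walk.mem_support_append_iff] at ht
    rcases ht with ht | ht
    · exact fun h => huq (h ▸ ht)
    · rw [Walk.support_reverse, List.mem_reverse] at ht
      exact fun h => hur (h ▸ ht)
  exact ⟨(q.append r.reverse).toInduce hsup⟩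

lemma internal_cut [Fintype V] (hbg : IsBlockGraph G) {u w : V} (p : G.Walk u w)
    (hp : p.IsPath) (hlen : p.length = G.dist u w) :
    ∀ x ∈ p.support, x ≠ u → x ≠ w → IsCutVertex G x := by
  classical
  intro x hxs hxu hxw
  have hqr : (p.takeUntil x hxs).append (p.dropUntil x hxs) = p := p.take_spec hxs
  set q := p.takeUntil x hxs with hq
  set r := p.dropUntil x hxs with hr
  have hsum : q.length + r.length = p.length := by rw [← Walk.length_append, hqr]
  have hqn : ¬ q.Nil := Walk.not_nil_of_ne (Ne.symm hxu)
  have hrn : ¬ r.Nil := Walk.not_nil_of_ne hxw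
  have hqrn : ¬ q.reverse.Nil := by
    rw [not_nil_iff_lt_length, Walk.length_reverse]
    rw [not_nil_iff_lt_length] at hqn; exact hqn
  -- a : vertex before x on p ; c : vertex after x
  have hxa : G.Adj x (q.reverse.getVert 1) := q.reverse.adj_snd hqrn
  have hxc : G.Adj x (r.getVert 1) := r.adj_snd hrn
  set a := q.reverse.getVert 1 with ha
  set c := r.getVert 1 with hc
  -- walks u → a and c → w
  set W1 : G.Walk u a := q.reverse.tail.reverse with hW1
  set W2 : G.Walk c w := r.tail with hW2
  have hl1 : W1.length + 1 = q.length := by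
    rw [hW1, Walk.length_reverse, ← Walk.length_reverse q]
    exact q.reverse.length_tail_add_one hqrn
  have hl2 : W2.length + 1 = r.length := r.length_tail_add_one hrn
  have hdle : G.dist u w = p.length := hlen.symm
  have hane : a ≠ c := by
    intro h
    have hK := SimpleGraph.dist_le (W1.append (W2.copy h.symm rfl))
    rw [Walk.length_append, Walk.length_copy] at hK
    omega
  have hnadj : ¬ G.Adj a c := by
    intro h
    have hK := SimpleGraph.dist_le (W1.append (Walk.cons h W2))
    rw [Walk.length_append, Walk.length_cons] at hK
    omega
  refine ⟨hbg.1, fun hcon => ?_⟩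
  exact hnadj (core_adj hbg hxa.symm hxc hane
    (hcon.preconnected ⟨a, hxa.ne'⟩ ⟨c, hxc.ne'⟩))

end Aux2

theorem stmt16 {V : Type*} [Fintype V] (G : SimpleGraph V) (hbg : IsBlockGraph G)
    (u w : V) (p : G.Walk u w) (hp : p.IsPath) (hlen : p.length = G.dist u w)
    (hdiam : ∀ x y : V, G.dist x y ≤ G.dist u w) (hd : 2 ≤ p.length) :
    Simplicial G u ∧ Simplicial G w ∧
      ∀ x ∈ p.support, x ≠ u → x ≠ w → IsCutVertex G x := by
  classical
  refine ⟨endpoint_simplicial hbg p hdiam, ?_, internal_cut hbg p hp hlen⟩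
  have hdiam' : ∀ x y, G.dist x y ≤ G.dist w u := by
    intro x y
    rw [SimpleGraph.dist_comm (u := w)]
    exact hdiam x y
  exact endpoint_simplicial hbg p.reverse hdiam'
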